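/- Let RG be the commutative algebra of R-valued functions on G with G-action (α_g f)(k) = f(g⁻¹k). Then the skew Hecke algebra H_R(G,H,RG,α) is isomorphic as an R-algebra to End_R(R[G/H]), hence to the matrix algebra M_n(R) with n = |G/H|. -/
import Mathlib


open scoped BigOperators

def SkewHecke.IsInv {R A G : Type*} [CommRing R] [Ring A] [Algebra R A] [Group G]
    (H : Subgroup G) (α : G →* (A ≃ₐ[R] A)) (φ : G ⧸ H → A) : Prop :=
  ∀ h ∈ H, ∀ g : G, φ (QuotientGroup.mk (h * g)) = α h (φ (QuotientGroup.mk g))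

def SkewHecke.IsSection {G : Type*} [Group G] {H : Subgroup G} (s : G ⧸ H → G) : Prop :=
  ∀ c : G ⧸ H, QuotientGroup.mk (s c) = c

noncomputable def SkewHecke.conv {R A G : Type*} [CommRing R] [Ring A] [Algebra R A] [Group G]
    (H : Subgroup G) [Fintype (G ⧸ H)] (α : G →* (A ≃ₐ[R] A))
    (s : G ⧸ H → G) (φ ψ : G ⧸ H → A) : G ⧸ H → A :=
  fun x => ∑ c : G ⧸ H, φ c * α (s c) (ψ ((s c)⁻¹ • x))

noncomputable def SkewHecke.delta {A G : Type*} [Ring A] [Group G] (H : Subgroup G)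
    (a : A) : G ⧸ H → A := by
  classical exact fun x => if x = QuotientGroup.mk (1 : G) then a else 0

section SkewHeckeAux

variable {R G : Type*} [CommRing R] [Group G] {H : Subgroup G}

/-- Key consequence of invariance: translating both arguments by `h ∈ H` fixes the value. -/
lemma SkewHecke.inv_eval (α : G →* ((G → R) ≃ₐ[R] (G → R)))
    (hα : ∀ (g : G) (f : G → R) (k : G), α g f k = f (g⁻¹ * k))
    {φ : G ⧸ H → G → R} (hφ : SkewHecke.IsInv H α φ)
    {h : G} (hh : h ∈ H) (c : G ⧸ H) (k : G) :
    φ (h • c) (h * k) = φ c k := by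
  obtain ⟨g, rfl⟩ := QuotientGroup.mk_surjective c
  have h1 : (h • (QuotientGroup.mk g : G ⧸ H)) = QuotientGroup.mk (h * g) := rfl
  rw [h1, hφ h hh g, hα]
  simp

/-- Recovery formula: an invariant `φ` is determined by its "matrix". -/
lemma SkewHecke.recover (α : G →* ((G → R) ≃ₐ[R] (G → R)))
    (hα : ∀ (g : G) (f : G → R) (k : G), α g f k = f (g⁻¹ * k))
    (s : G ⧸ H → G) (hs : SkewHecke.IsSection s)
    {φ : G ⧸ H → G → R} (hφ : SkewHecke.IsInv H α φ) (c : G ⧸ H) (k : G) :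
    φ ((s (QuotientGroup.mk k⁻¹))⁻¹ • (k⁻¹ • c)) ((s (QuotientGroup.mk k⁻¹))⁻¹) = φ c k := by
  set x : G ⧸ H := QuotientGroup.mk k⁻¹ with hx
  have hmem : (s x)⁻¹ * k⁻¹ ∈ H := by
    have := hs x
    rw [hx] at this
    exact (QuotientGroup.eq).mp this
  set h : G := (s x)⁻¹ * k⁻¹ with hh
  have hsx : (s x)⁻¹ = h * k := by rw [hh]; group
  rw [hsx]
  have : (h * k) • (k⁻¹ • c) = h • c := by rw [smul_smul, mul_inv_cancel_right]
  rw [this]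
  exact SkewHecke.inv_eval α hα hφ hmem c k

end SkewHeckeAux

/-- For `RG` the commutative algebra of `R`-valued functions on `G` with the left
translation action `α`, the skew Hecke algebra `H_R(G,H,RG,α)` is isomorphic as an
`R`-algebra to `End_R(R[G/H])`, hence to the matrix algebra `M_n(R)`, `n = |G/H|`. -/
theorem skewHecke_functions_iso_matrix {R G : Type*} [CommRing R] [Group G]
    (H : Subgroup G) [Fintype (G ⧸ H)] [DecidableEq (G ⧸ H)]
    (α : G →* ((G → R) ≃ₐ[R] (G → R)))
    (hα : ∀ (g : G) (f : G → R) (k : G), α g f k = f (g⁻¹ * k))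
    (s : G ⧸ H → G) (hs : SkewHecke.IsSection s) :
    (∃ e : (G ⧸ H → (G → R)) → Module.End R ((G ⧸ H) →₀ R),
      -- `e` is a bijection from the skew Hecke algebra onto all of `End_R(R[G/H])`
      Set.BijOn e {φ | SkewHecke.IsInv H α φ} Set.univ ∧
      -- `e` is `R`-linear on the skew Hecke algebra
      (∀ φ ψ, SkewHecke.IsInv H α φ → SkewHecke.IsInv H α ψ →
        e (φ + ψ) = e φ + e ψ) ∧
      (∀ (r : R) (φ), SkewHecke.IsInv H α φ → e (r • φ) = r • e φ) ∧
      -- `e` is multiplicative and unital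
      (∀ φ ψ, SkewHecke.IsInv H α φ → SkewHecke.IsInv H α ψ →
        e (SkewHecke.conv H α s φ ψ) = e φ * e ψ) ∧
      e (SkewHecke.delta H (1 : G → R)) = 1) ∧
    -- hence the skew Hecke algebra is isomorphic to the matrix algebra `M_n(R)`
    Nonempty (Module.End R ((G ⧸ H) →₀ R) ≃ₐ[R] Matrix (G ⧸ H) (G ⧸ H) R) := by
  classical
  set E : Module.End R ((G ⧸ H) →₀ R) ≃ₐ[R] Matrix (G ⧸ H) (G ⧸ H) R :=
    algEquivMatrix (Finsupp.basisSingleOne) with hE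
  set Mat : (G ⧸ H → (G → R)) → Matrix (G ⧸ H) (G ⧸ H) R :=
    fun φ => Matrix.of fun x y => φ ((s x)⁻¹ • y) ((s x)⁻¹) with hMat
  have hMatApp : ∀ φ x y, Mat φ x y = φ ((s x)⁻¹ • y) ((s x)⁻¹) := fun _ _ _ => rfl
  refine ⟨⟨fun φ => E.symm (Mat φ), ?_, ?_, ?_, ?_, ?_⟩, ⟨E⟩⟩
  · -- bijectivity
    refine ⟨fun _ _ => trivial, ?_, ?_⟩
    · -- injective on invariants
      intro φ hφ ψ hψ hMeq
      have hM : Mat φ = Mat ψ := E.symm.injective hMeq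
      funext c k
      have h1 := SkewHecke.recover α hα s hs hφ c k
      have h2 := SkewHecke.recover α hα s hs hψ c k
      rw [← h1, ← h2]
      exact congrFun (congrFun hM (QuotientGroup.mk k⁻¹)) (k⁻¹ • c)
    · -- surjective
      intro f _
      set M : Matrix (G ⧸ H) (G ⧸ H) R := E f with hMdef
      set φ : G ⧸ H → G → R := fun c k => M (QuotientGroup.mk k⁻¹) (k⁻¹ • c) with hφdef
      have hφinv : SkewHecke.IsInv H α φ := by
        intro h hh g
        funext k
        have hr : α h (φ (QuotientGroup.mk g)) k = φ (QuotientGroup.mk g) (h⁻¹ * k) := hα h _ k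
        rw [hr, hφdef]
        simp only
        have e1 : (QuotientGroup.mk ((h⁻¹ * k)⁻¹) : G ⧸ H) = QuotientGroup.mk k⁻¹ := by
          have : (h⁻¹ * k)⁻¹ = k⁻¹ * h := by group
          rw [this]
          exact QuotientGroup.mk_mul_of_mem k⁻¹ hh
        have e2 : ((h⁻¹ * k)⁻¹ • (QuotientGroup.mk g : G ⧸ H)) =
            (k⁻¹ • (QuotientGroup.mk (h * g) : G ⧸ H)) := by
          have l1 : ((h⁻¹ * k)⁻¹ • (QuotientGroup.mk g : G ⧸ H)) =
              QuotientGroup.mk ((h⁻¹ * k)⁻¹ * g) := rfl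
          have l2 : (k⁻¹ • (QuotientGroup.mk (h * g) : G ⧸ H)) =
              QuotientGroup.mk (k⁻¹ * (h * g)) := rfl
          rw [l1, l2]
          congr 1
          group
        rw [e1, e2]
      refine ⟨φ, hφinv, ?_⟩
      have hMφ : Mat φ = M := by
        funext x y
        rw [hMatApp, hφdef]
        simp only [inv_inv, smul_inv_smul]
        rw [hs x]
      simp only
      rw [hMφ, hMdef, AlgEquiv.symm_apply_apply]
  · -- additive
    intro φ ψ _ _
    have h1 : Mat (φ + ψ) = Mat φ + Mat ψ := by
      funext x y
      simp [hMatApp, Pi.add_apply]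
    show E.symm (Mat (φ + ψ)) = E.symm (Mat φ) + E.symm (Mat ψ)
    rw [h1, map_add]
  · -- scalar
    intro r φ _
    have h1 : Mat (r • φ) = r • Mat φ := by
      funext x y
      simp [hMatApp, Pi.smul_apply]
    show E.symm (Mat (r • φ)) = r • E.symm (Mat φ)
    rw [h1, map_smul]
  · -- multiplicative
    intro φ ψ hφ hψ
    have key : Mat (SkewHecke.conv H α s φ ψ) = Mat φ * Mat ψ := by
      funext x y
      rw [hMatApp]
      show SkewHecke.conv H α s φ ψ ((s x)⁻¹ • y) ((s x)⁻¹) = (Mat φ * Mat ψ) x y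
      rw [SkewHecke.conv]
      rw [Finset.sum_apply]
      rw [Matrix.mul_apply]
      refine Fintype.sum_equiv (MulAction.toPerm (s x)) _ _ ?_
      intro c
      have hperm : (MulAction.toPerm (s x)) c = s x • c := rfl
      rw [hperm, hMatApp, hMatApp]
      set d : G ⧸ H := s x • c with hd
      rw [inv_smul_smul]
      have hmem : (s x * s c)⁻¹ * s d ∈ H := by
        refine (QuotientGroup.eq).mp ?_
        have l1 : (QuotientGroup.mk (s x * s c) : G ⧸ H) = s x • QuotientGroup.mk (s c) := rfl
        rw [l1, hs c, hs d]
      set h : G := (s x * s c)⁻¹ * s d with hh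
      have hsd : (s d)⁻¹ = h⁻¹ * ((s c)⁻¹ * (s x)⁻¹) := by rw [hh]; group
      have hterm : ψ ((s d)⁻¹ • y) ((s d)⁻¹) =
          ψ (((s c)⁻¹ * (s x)⁻¹) • y) ((s c)⁻¹ * (s x)⁻¹) := by
        rw [hsd, mul_smul]
        exact SkewHecke.inv_eval α hα hψ (H.inv_mem hmem) _ _
      rw [hterm]
      have hαterm : (φ c * α (s c) (ψ ((s c)⁻¹ • ((s x)⁻¹ • y)))) ((s x)⁻¹) =
          φ c ((s x)⁻¹) * ψ ((s c)⁻¹ • ((s x)⁻¹ • y)) ((s c)⁻¹ * (s x)⁻¹) := by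
        rw [Pi.mul_apply, hα]
      rw [hαterm, ← mul_smul]
    show E.symm (Mat (SkewHecke.conv H α s φ ψ)) = E.symm (Mat φ) * E.symm (Mat ψ)
    rw [key, map_mul]
  · -- unital
    have key : Mat (SkewHecke.delta H (1 : G → R)) = 1 := by
      funext x y
      rw [hMatApp, SkewHecke.delta]
      rw [apply_ite (fun f : G → R => f ((s x)⁻¹)), Pi.one_apply, Pi.zero_apply]
      have hcond : ((s x)⁻¹ • y = QuotientGroup.mk (1 : G)) ↔ x = y := by
        constructor
        · intro hy
          have : y = s x • (QuotientGroup.mk (1 : G) : G ⧸ H) := by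
            rw [← hy, smul_inv_smul]
          rw [this]
          have l : (s x • (QuotientGroup.mk (1 : G) : G ⧸ H)) = QuotientGroup.mk (s x * 1) := rfl
          rw [l, mul_one, hs x]
        · intro hy
          subst hy
          have l : ((s x)⁻¹ • x : G ⧸ H) = (s x)⁻¹ • QuotientGroup.mk (s x) := by rw [hs x]
          rw [l]
          show (QuotientGroup.mk ((s x)⁻¹ * s x) : G ⧸ H) = QuotientGroup.mk 1
          rw [inv_mul_cancel]
      rw [Matrix.one_apply]
      simp [hcond]
    show E.symm (Mat (SkewHecke.delta H (1 : G → R))) = 1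
    rw [key, map_one]
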